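/- Input approximation bound: let π be a prior on X, X' a nonempty proper subset of X with max_{x' ∈ X'} π[x'] ≤ min_{x ∈ X∖X'} π[x], ε = Σ_{x'∈X'} π[x'], and π' the sub-distribution equal to π on X∖X' and 0 on X'. Then I_∞(π', C) ≤ I_∞(π, C) ≤ I_∞(π', C) + log(1 + ε / V(π', C)). -/

import Mathlib

open Finset

namespace QIF15

/-- Prior vulnerability. -/
noncomputable def Vmax {X : Type*} [Fintype X] [Nonempty X] (π : X → ℝ) : ℝ :=
  Finset.univ.sup' Finset.univ_nonempty π

/-- Posterior vulnerability. -/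
noncomputable def Vpost {X Y : Type*} [Fintype X] [Fintype Y] [Nonempty X]
    (π : X → ℝ) (C : X → Y → ℝ) : ℝ :=
  ∑ y, Finset.univ.sup' Finset.univ_nonempty fun x => π x * C x y

/-- Min-entropy leakage (in bits), defined also for sub-probability distributions. -/
noncomputable def Iinf {X Y : Type*} [Fintype X] [Fintype Y] [Nonempty X]
    (π : X → ℝ) (C : X → Y → ℝ) : ℝ :=
  Real.logb 2 (Vpost π C / Vmax π)

/-- Input approximation: removing the smallest input probabilities (of total mass ε)
perturbs the min-entropy leakage by at most `log(1 + ε / V(π',C))`. -/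
theorem input_approximation_bounds {X Y : Type*} [DecidableEq X]
    [Fintype X] [Fintype Y] [Nonempty X]
    (π : X → ℝ) (C : X → Y → ℝ) (X' : Finset X)
    (hπ0 : ∀ x, 0 ≤ π x) (hπ1 : ∑ x, π x = 1)
    (hC0 : ∀ x y, 0 ≤ C x y) (hC1 : ∀ x, ∑ y, C x y = 1)
    (hne : X'.Nonempty) (hproper : X' ≠ Finset.univ)
    (hsmall : ∀ x' ∈ X', ∀ x ∉ X', π x' ≤ π x)
    (hVpos : 0 < Vpost (fun x => if x ∈ X' then 0 else π x) C) :
    Iinf (fun x => if x ∈ X' then 0 else π x) C ≤ Iinf π C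
      ∧ Iinf π C
          ≤ Iinf (fun x => if x ∈ X' then 0 else π x) C
            + Real.logb 2
              (1 + (∑ x' ∈ X', π x')
                / Vpost (fun x => if x ∈ X' then 0 else π x) C) := by
  set π' : X → ℝ := fun x => if x ∈ X' then 0 else π x with hπ'def
  obtain ⟨x₀, hx₀⟩ : ∃ x, x ∉ X' := by
    by_contra h; push_neg at h; exact hproper (Finset.eq_univ_iff_forall.mpr h)
  have hπ'0 : ∀ x, 0 ≤ π' x := fun x => by
    by_cases h : x ∈ X' <;> simp [π', h, hπ0 x]
  have hπ'le : ∀ x, π' x ≤ π x := fun x => by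
    by_cases h : x ∈ X' <;> simp [π', h, hπ0 x]
  -- Vmax π' = Vmax π
  have hS : (X'ᶜ : Finset X).Nonempty := ⟨x₀, Finset.mem_compl.mpr hx₀⟩
  have h1 : Vmax π = (X'ᶜ : Finset X).sup' hS π := by
    apply le_antisymm
    · apply Finset.sup'_le; intro x _
      by_cases h : x ∈ X'
      · exact le_trans (hsmall x h x₀ hx₀) (Finset.le_sup' _ (Finset.mem_compl.mpr hx₀))
      · exact Finset.le_sup' _ (Finset.mem_compl.mpr h)
    · apply Finset.sup'_le; intro x _; exact Finset.le_sup' _ (Finset.mem_univ x)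
  have h2 : Vmax π' = (X'ᶜ : Finset X).sup' hS π := by
    apply le_antisymm
    · apply Finset.sup'_le; intro x _
      by_cases h : x ∈ X'
      · show (if x ∈ X' then 0 else π x) ≤ _
        rw [if_pos h]
        exact le_trans (hπ0 x₀) (Finset.le_sup' π (Finset.mem_compl.mpr hx₀))
      · show (if x ∈ X' then 0 else π x) ≤ _
        rw [if_neg h]
        exact Finset.le_sup' π (Finset.mem_compl.mpr h)
    · apply Finset.sup'_le; intro x hx
      have hx' : x ∉ X' := Finset.mem_compl.mp hx
      calc π x = π' x := by simp [π', hx']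
        _ ≤ Vmax π' := Finset.le_sup' _ (Finset.mem_univ x)
  have hVmaxEq : Vmax π' = Vmax π := h2.trans h1.symm
  have hVmaxpos : 0 < Vmax π := by
    by_contra h
    push_neg at h
    have : (1:ℝ) ≤ 0 := by
      rw [← hπ1]
      exact Finset.sum_nonpos fun x _ => le_trans (Finset.le_sup' π (Finset.mem_univ x)) h
    linarith
  -- each sup' in Vpost π' is nonneg
  have hsupnn : ∀ y : Y, 0 ≤ Finset.univ.sup' Finset.univ_nonempty fun x => π' x * C x y := by
    intro y
    exact le_trans (mul_nonneg (hπ'0 x₀) (hC0 x₀ y)) (Finset.le_sup' (fun x => π' x * C x y) (Finset.mem_univ x₀))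
  -- Vpost π' ≤ Vpost π
  have hVple : Vpost π' C ≤ Vpost π C := by
    apply Finset.sum_le_sum; intro y _
    apply Finset.sup'_le; intro x _
    exact le_trans (mul_le_mul_of_nonneg_right (hπ'le x) (hC0 x y))
      (Finset.le_sup' (fun x => π x * C x y) (Finset.mem_univ x))
  set ε : ℝ := ∑ x' ∈ X', π x' with hεdef
  have hε0 : 0 ≤ ε := Finset.sum_nonneg fun x _ => hπ0 x
  -- Vpost π ≤ Vpost π' + ε
  have hkey : Vpost π C ≤ Vpost π' C + ε := by
    have hy : ∀ y : Y, (Finset.univ.sup' Finset.univ_nonempty fun x => π x * C x y)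
        ≤ (Finset.univ.sup' Finset.univ_nonempty fun x => π' x * C x y)
          + ∑ x' ∈ X', π x' * C x' y := by
      intro y
      apply Finset.sup'_le; intro x _
      by_cases h : x ∈ X'
      · have h1 : π x * C x y ≤ ∑ x' ∈ X', π x' * C x' y :=
          Finset.single_le_sum (fun x' _ => mul_nonneg (hπ0 x') (hC0 x' y)) h
        linarith [hsupnn y]
      · have h1 : π x * C x y = π' x * C x y := by simp [π', h]
        have h2 : π' x * C x y ≤ Finset.univ.sup' Finset.univ_nonempty fun x => π' x * C x y :=
          Finset.le_sup' (fun x => π' x * C x y) (Finset.mem_univ x)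
        have h3 : 0 ≤ ∑ x' ∈ X', π x' * C x' y :=
          Finset.sum_nonneg fun x' _ => mul_nonneg (hπ0 x') (hC0 x' y)
        linarith
    calc Vpost π C ≤ ∑ y, ((Finset.univ.sup' Finset.univ_nonempty fun x => π' x * C x y)
          + ∑ x' ∈ X', π x' * C x' y) := Finset.sum_le_sum fun y _ => hy y
      _ = Vpost π' C + ∑ y, ∑ x' ∈ X', π x' * C x' y := by
          rw [Finset.sum_add_distrib]; rfl
      _ = Vpost π' C + ε := by
          congr 1
          rw [Finset.sum_comm]
          calc ∑ x' ∈ X', ∑ y, π x' * C x' y = ∑ x' ∈ X', π x' * ∑ y, C x' y := by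
                simp [Finset.mul_sum]
            _ = ε := by simp [hC1, hεdef]
  have hb : (1:ℝ) < 2 := one_lt_two
  have hq'pos : 0 < Vpost π' C / Vmax π := div_pos hVpos hVmaxpos
  constructor
  · show Real.logb 2 (Vpost π' C / Vmax π') ≤ Real.logb 2 (Vpost π C / Vmax π)
    rw [hVmaxEq]
    exact Real.logb_le_logb_of_le hb hq'pos (div_le_div_of_nonneg_right hVple hVmaxpos.le)
  · show Real.logb 2 (Vpost π C / Vmax π)
        ≤ Real.logb 2 (Vpost π' C / Vmax π') + Real.logb 2 (1 + ε / Vpost π' C)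
    rw [hVmaxEq, ← Real.logb_mul (ne_of_gt hq'pos)
        (by positivity : (1 + ε / Vpost π' C) ≠ 0)]
    apply Real.logb_le_logb_of_le hb (div_pos (lt_of_lt_of_le hVpos hVple) hVmaxpos)
    have heq : Vpost π' C / Vmax π * (1 + ε / Vpost π' C) = (Vpost π' C + ε) / Vmax π := by
      field_simp
    rw [heq]
    exact div_le_div_of_nonneg_right hkey hVmaxpos.le

end QIF15
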